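/- Let τ > 0 and let (a_n) be a sequence of nonnegative reals with a_0 = A such that for every n, a_{n+1} - a_n ≤ τ γ (a_n + a_{n+1}) + τ c with τ γ < 1/4. Then for all n, a_n ≤ (A + n τ c) · exp(8 γ n τ). -/
import Mathlib


/-- A one-step discrete Gronwall-type estimate. -/
theorem one_step_discrete_gronwall
    (τ γ c A : ℝ) (a : ℕ → ℝ)
    (hτ : 0 < τ) (hγ : 0 ≤ γ) (hc : 0 ≤ c)
    (ha : ∀ n, 0 ≤ a n) (ha0 : a 0 = A)
    (hrec : ∀ n, a (n + 1) - a n ≤ τ * γ * (a n + a (n + 1)) + τ * c)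
    (hsmall : τ * γ < 1 / 4) :
    ∀ n : ℕ, a n ≤ (A + n * τ * c) * Real.exp (8 * γ * n * τ) := by
  have hx : 0 ≤ τ * γ := mul_nonneg hτ.le hγ
  have h1x : 0 < 1 - τ * γ := by linarith
  have hτc : 0 ≤ τ * c := mul_nonneg hτ.le hc
  have hE := Real.add_one_le_exp (8 * γ * τ)
  have hEpos := Real.exp_pos (8 * γ * τ)
  have hE1 : (1 + τ * γ) ≤ (1 - τ * γ) * Real.exp (8 * γ * τ) := by nlinarith
  have hE2 : (1 : ℝ) ≤ (1 - τ * γ) * Real.exp (8 * γ * τ) := by nlinarith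
  have key : ∀ n, a (n + 1) ≤ Real.exp (8 * γ * τ) * (a n + τ * c) := by
    intro n
    have h := hrec n
    have han := ha n
    have han1 := ha (n + 1)
    nlinarith [mul_le_mul_of_nonneg_left hE1 han, mul_le_mul_of_nonneg_left hE2 hτc]
  intro n
  induction n with
  | zero => simp [ha0]
  | succ n ih =>
    have hEn : (1 : ℝ) ≤ Real.exp (8 * γ * n * τ) := Real.one_le_exp (by positivity)
    have hEnpos := Real.exp_pos (8 * γ * (n : ℝ) * τ)
    calc a (n + 1) ≤ Real.exp (8 * γ * τ) * (a n + τ * c) := key n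
      _ ≤ Real.exp (8 * γ * τ) * ((A + n * τ * c) * Real.exp (8 * γ * n * τ)
            + τ * c * Real.exp (8 * γ * n * τ)) := by
          have h1 := ih
          have h2 : τ * c ≤ τ * c * Real.exp (8 * γ * n * τ) := le_mul_of_one_le_right hτc hEn
          nlinarith [hEpos.le]
      _ = (A + (↑(n + 1)) * τ * c) * Real.exp (8 * γ * (↑(n + 1)) * τ) := by
          have hmul : Real.exp (8 * γ * τ) * Real.exp (8 * γ * (n : ℝ) * τ)
              = Real.exp (8 * γ * ((n : ℝ) + 1) * τ) := by
            rw [← Real.exp_add]; ring_nf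
          push_cast
          rw [← hmul]; ring
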